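/- arXiv:2006.15266 — 2 statements merged into one kernel-verified Lean document; each statement's English description precedes it below -/
import Mathlib

section
/- Under the stated assumptions, for any x ∈ dom Ψ_{γ'}, any v ∈ ℝᵖ, any η > 0 and θ ∈ [0, 1], setting x̂⁺ := prox_{ηℛ}(x − ηv) and x⁺ := (1−θ)x + θx̂⁺, one has Ψ_γ(x⁺) ≤ Ψ_{γ'}(x) + (γ' − γ)B_ψ + (θ(1 + L_{Φ_γ}²η²)/(2L_{Φ_γ}))‖∇Φ_γ(x) − v‖² − (L_{Φ_γ}η²θ/4)‖G_η(x)‖² − (θ/2)(2/η − L_{Φ_γ}θ − 2L_{Φ_γ})‖x̂⁺ − x‖². -/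
open scoped RealInnerProductSpace

lemma aux_lsc_bddBelow {X : Type*} [TopologicalSpace X] {s : Set X} (hs : IsCompact s)
    {f : X → ℝ} (hf : LowerSemicontinuousOn f s) : ∃ m : ℝ, ∀ y ∈ s, m ≤ f y := by
  obtain ⟨t, hts, hcov⟩ := hs.elim_nhds_subcover (fun y => {z | z ∈ s → f y - 1 < f z})
    (by
      intro y hy
      have h := hf y hy (f y - 1) (by linarith)
      rw [eventually_nhdsWithin_iff] at h
      exact h)
  rcases t.eq_empty_or_nonempty with he | hne
  · exact ⟨0, fun y hy => absurd (hcov hy) (by simp [he])⟩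
  · refine ⟨t.inf' hne (fun y => f y - 1), fun y hy => ?_⟩
    have h := hcov hy
    simp only [Set.mem_iUnion] at h
    obtain ⟨z, hzt, hz⟩ := h
    exact le_trans (Finset.inf'_le _ hzt) (le_of_lt (hz hy))

lemma aux_descent {E : Type*} [NormedAddCommGroup E] [InnerProductSpace ℝ E] [CompleteSpace E]
    (f : E → ℝ) (g : E → E) (hg : ∀ z, HasGradientAt f (g z) z)
    (L : ℝ) (hL : 0 ≤ L) (hLip : ∀ z z', ‖g z - g z'‖ ≤ L * ‖z - z'‖)
    (x y : E) : f y ≤ f x + ⟪g x, y - x⟫ + L / 2 * ‖y - x‖ ^ 2 := by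
  set d := y - x with hd
  have hc : ∀ t : ℝ, HasDerivAt (fun t : ℝ => x + t • d) d t := by
    intro t
    simpa using ((hasDerivAt_id t).smul_const d).const_add x
  set q : ℝ → ℝ := fun t => f (x + t • d) - t * ⟪g x, d⟫ - L / 2 * t ^ 2 * ‖d‖ ^ 2 with hqdef
  have hq : ∀ t : ℝ, HasDerivAt q (⟪g (x + t • d), d⟫ - ⟪g x, d⟫ - L * t * ‖d‖ ^ 2) t := by
    intro t
    have h1 : HasDerivAt (fun t : ℝ => f (x + t • d)) (⟪g (x + t • d), d⟫) t := by
      have := (hg (x + t • d)).hasFDerivAt.comp_hasDerivAt t (hc t)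
      simpa [Function.comp_def, InnerProductSpace.toDual_apply_apply] using this
    have h2 : HasDerivAt (fun t : ℝ => t * ⟪g x, d⟫) (⟪g x, d⟫) t := by
      simpa using (hasDerivAt_id t).mul_const (⟪g x, d⟫)
    have h3 : HasDerivAt (fun t : ℝ => L / 2 * t ^ 2 * ‖d‖ ^ 2) (L * t * ‖d‖ ^ 2) t := by
      have := ((hasDerivAt_pow 2 t).const_mul (L / 2)).mul_const (‖d‖ ^ 2)
      exact this.congr_deriv (by ring)
    exact (h1.sub h2).sub h3
  have hanti : AntitoneOn q (Set.Icc 0 1) := by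
    apply antitoneOn_of_deriv_nonpos (convex_Icc 0 1)
    · exact fun t _ => ((hq t).differentiableAt).continuousAt.continuousWithinAt
    · intro t _
      exact ((hq t).differentiableAt).differentiableWithinAt
    · intro t ht
      rw [interior_Icc] at ht
      rw [(hq t).deriv]
      have h1 : ⟪g (x + t • d), d⟫ - ⟪g x, d⟫ = ⟪g (x + t • d) - g x, d⟫ := by
        rw [inner_sub_left]
      have h2 := hLip (x + t • d) x
      rw [show x + t • d - x = t • d from by abel, norm_smul, Real.norm_eq_abs, abs_of_pos ht.1] at h2
      have h3 := real_inner_le_norm (g (x + t • d) - g x) d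
      have h4 := norm_nonneg d
      nlinarith [ht.1.le]
  have h01 := hanti (Set.mem_Icc.mpr ⟨le_refl 0, zero_le_one⟩)
      (Set.mem_Icc.mpr ⟨zero_le_one, le_refl 1⟩) zero_le_one
  have hq0 : q 0 = f x := by simp [hqdef]
  have hq1 : q 1 = f y - ⟪g x, d⟫ - L / 2 * ‖d‖ ^ 2 := by
    simp [hqdef, hd]
  rw [hq0, hq1] at h01
  linarith

lemma aux_strongmin {E : Type*} [NormedAddCommGroup E] [InnerProductSpace ℝ E]
    (s : Set E) (R : E → ℝ) (hR : ConvexOn ℝ s R)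
    (η : ℝ) (hη : 0 < η) (u w z : E) (hw : w ∈ s) (hz : z ∈ s)
    (hmin : IsMinOn (fun y => R y + ‖y - u‖ ^ 2 / (2 * η)) s w) :
    R w + ‖w - u‖ ^ 2 / (2 * η) + ‖z - w‖ ^ 2 / (2 * η) ≤ R z + ‖z - u‖ ^ 2 / (2 * η) := by
  have hD : 0 ≤ ‖z - w‖ ^ 2 / (2 * η) := by positivity
  have key : ∀ t : ℝ, 0 < t → t ≤ 1 →
      R w + ‖w - u‖ ^ 2 / (2 * η) + ‖z - w‖ ^ 2 / (2 * η) - (R z + ‖z - u‖ ^ 2 / (2 * η))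
        ≤ t * (‖z - w‖ ^ 2 / (2 * η)) := by
    intro t ht0 ht1
    have ha : (0:ℝ) ≤ 1 - t := by linarith
    have hmem : (1 - t) • w + t • z ∈ s := hR.1 hw hz ha ht0.le (by ring)
    have hm := isMinOn_iff.mp hmin _ hmem
    have hcvx := hR.2 hw hz ha ht0.le (by ring : (1 - t) + t = 1)
    simp only [smul_eq_mul] at hcvx
    have hnorm : ‖((1 - t) • w + t • z) - u‖ ^ 2
        = (1 - t) * ‖w - u‖ ^ 2 + t * ‖z - u‖ ^ 2 - t * (1 - t) * ‖z - w‖ ^ 2 := by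
      have e1 : ((1 - t) • w + t • z) - u = (1 - t) • (w - u) + t • (z - u) := by module
      have e2 : z - w = (z - u) - (w - u) := by abel
      rw [e1, norm_add_sq_real, norm_smul, norm_smul, real_inner_smul_left,
        real_inner_smul_right, Real.norm_eq_abs, Real.norm_eq_abs,
        abs_of_nonneg ha, abs_of_nonneg ht0.le, e2, norm_sub_sq_real (z - u) (w - u),
        real_inner_comm (z - u) (w - u)]
      ring
    -- combine
    have hstep : R w + ‖w - u‖ ^ 2 / (2 * η)
        ≤ (1 - t) * R w + t * R z
          + ((1 - t) * ‖w - u‖ ^ 2 + t * ‖z - u‖ ^ 2 - t * (1 - t) * ‖z - w‖ ^ 2) / (2 * η) := by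
      calc R w + ‖w - u‖ ^ 2 / (2 * η) ≤ R ((1 - t) • w + t • z)
            + ‖((1 - t) • w + t • z) - u‖ ^ 2 / (2 * η) := hm
        _ ≤ _ := by rw [hnorm]; exact add_le_add_left hcvx _
    have hdiv : ((1 - t) * ‖w - u‖ ^ 2 + t * ‖z - u‖ ^ 2 - t * (1 - t) * ‖z - w‖ ^ 2) / (2 * η)
        = (1 - t) * (‖w - u‖ ^ 2 / (2 * η)) + t * (‖z - u‖ ^ 2 / (2 * η))
          - t * (1 - t) * (‖z - w‖ ^ 2 / (2 * η)) := by
      field_simp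
    rw [hdiv] at hstep
    -- hstep : t*(R w + A) ≤ t*(R z + C) - t*(1-t)*D  after rearrangement
    have hstep2 : t * (R w + ‖w - u‖ ^ 2 / (2 * η) + (1 - t) * (‖z - w‖ ^ 2 / (2 * η)))
        ≤ t * (R z + ‖z - u‖ ^ 2 / (2 * η)) := by nlinarith [hstep]
    have hstep3 := (mul_le_mul_iff_right₀ ht0).mp hstep2
    nlinarith [hstep3]
  by_contra hcon
  push_neg at hcon
  set D := ‖z - w‖ ^ 2 / (2 * η) with hDdef
  set δ := R w + ‖w - u‖ ^ 2 / (2 * η) + D - (R z + ‖z - u‖ ^ 2 / (2 * η)) with hδdef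
  have hδ : 0 < δ := by simp only [hδdef]; linarith
  rcases eq_or_lt_of_le hD with hD0 | hD0
  · have := key 1 one_pos le_rfl
    rw [← hD0] at this
    linarith
  · have ht0 : 0 < min 1 (δ / (2 * D)) := lt_min one_pos (by positivity)
    have h := key (min 1 (δ / (2 * D))) ht0 (min_le_left _ _)
    have h2 : min 1 (δ / (2 * D)) * D ≤ (δ / (2 * D)) * D :=
      mul_le_mul_of_nonneg_right (min_le_right _ _) hD
    have h3 : (δ / (2 * D)) * D = δ / 2 := by field_simp
    linarith

lemma aux_nonexp {E : Type*} [NormedAddCommGroup E] [InnerProductSpace ℝ E]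
    (s : Set E) (R : E → ℝ) (hR : ConvexOn ℝ s R)
    (η : ℝ) (hη : 0 < η) (u₁ u₂ w₁ w₂ : E) (hw₁ : w₁ ∈ s) (hw₂ : w₂ ∈ s)
    (hmin₁ : IsMinOn (fun y => R y + ‖y - u₁‖ ^ 2 / (2 * η)) s w₁)
    (hmin₂ : IsMinOn (fun y => R y + ‖y - u₂‖ ^ 2 / (2 * η)) s w₂) :
    ‖w₁ - w₂‖ ≤ ‖u₁ - u₂‖ := by
  have S1 := aux_strongmin s R hR η hη u₁ w₁ w₂ hw₁ hw₂ hmin₁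
  have S2 := aux_strongmin s R hR η hη u₂ w₂ w₁ hw₂ hw₁ hmin₂
  rw [norm_sub_rev w₂ w₁] at S1
  have hsum : (2 * ‖w₁ - w₂‖ ^ 2 - (‖w₂ - u₁‖ ^ 2 + ‖w₁ - u₂‖ ^ 2 - ‖w₁ - u₁‖ ^ 2
      - ‖w₂ - u₂‖ ^ 2)) / (2 * η) ≤ 0 := by
    have e : (2 * ‖w₁ - w₂‖ ^ 2 - (‖w₂ - u₁‖ ^ 2 + ‖w₁ - u₂‖ ^ 2 - ‖w₁ - u₁‖ ^ 2
        - ‖w₂ - u₂‖ ^ 2)) / (2 * η)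
        = 2 * (‖w₁ - w₂‖ ^ 2 / (2 * η)) - (‖w₂ - u₁‖ ^ 2 / (2 * η) + ‖w₁ - u₂‖ ^ 2 / (2 * η)
          - ‖w₁ - u₁‖ ^ 2 / (2 * η) - ‖w₂ - u₂‖ ^ 2 / (2 * η)) := by field_simp
    rw [e]
    linarith [S1, S2]
  have hX : 2 * ‖w₁ - w₂‖ ^ 2 - (‖w₂ - u₁‖ ^ 2 + ‖w₁ - u₂‖ ^ 2 - ‖w₁ - u₁‖ ^ 2
      - ‖w₂ - u₂‖ ^ 2) ≤ 0 := by
    have h2η : (0:ℝ) < 2 * η := by linarith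
    by_contra hcon
    push_neg at hcon
    have := div_pos hcon h2η
    linarith
  have hexp : ‖w₂ - u₁‖ ^ 2 + ‖w₁ - u₂‖ ^ 2 - ‖w₁ - u₁‖ ^ 2 - ‖w₂ - u₂‖ ^ 2
      = 2 * ⟪w₁ - w₂, u₁ - u₂⟫ := by
    rw [norm_sub_sq_real, norm_sub_sq_real, norm_sub_sq_real, norm_sub_sq_real,
      inner_sub_left, inner_sub_right, inner_sub_right]
    ring
  rw [hexp] at hX
  have hIb := real_inner_le_norm (w₁ - w₂) (u₁ - u₂)
  rcases eq_or_lt_of_le (norm_nonneg (w₁ - w₂)) with h0 | h0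
  · rw [← h0]; exact norm_nonneg _
  · nlinarith [norm_nonneg (u₁ - u₂)]

set_option maxHeartbeats 1000000 in
/-- One-step descent bound: for `x ∈ dom Ψ_{γ'}`, any `v`, `η > 0`, `θ ∈ [0,1]`,
with `x̂⁺ := prox_{ηℛ}(x − ηv)` and `x⁺ := (1−θ)x + θx̂⁺`,
`Ψ_γ(x⁺) ≤ Ψ_{γ'}(x) + (γ' − γ)B_ψ + (θ(1 + L²η²)/(2L))‖∇Φ_γ(x) − v‖²
  − (Lη²θ/4)‖G_η(x)‖² − (θ/2)(2/η − Lθ − 2L)‖x̂⁺ − x‖²`, where `L = L_{Φ_γ}`. -/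
theorem stmt_9 {p q n : ℕ}
    (K : EuclideanSpace ℝ (Fin n) →L[ℝ] EuclideanSpace ℝ (Fin q))
    (ψ : EuclideanSpace ℝ (Fin n) → ℝ) (dψ : Set (EuclideanSpace ℝ (Fin n)))
    -- ψ proper, closed, convex with bounded domain
    (hdψ_ne : dψ.Nonempty) (hdψ_closed : IsClosed dψ) (hdψ_convex : Convex ℝ dψ)
    (hψ_convex : ConvexOn ℝ dψ ψ) (hψ_lsc : LowerSemicontinuousOn ψ dψ)
    (Mψ : ℝ) (hMψ : ∀ y ∈ dψ, ‖y‖ ≤ Mψ)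
    -- the proximity function b and Bψ := sup b over dom ψ
    (b : EuclideanSpace ℝ (Fin n) → ℝ)
    (hb_nonneg : ∀ y ∈ dψ, 0 ≤ b y)
    (hb_smooth : ContDiff ℝ 1 b)
    (hb_sconv : StrongConvexOn dψ 1 b)
    (hb_min : ∃ y ∈ dψ, b y = 0)
    (Bψ : ℝ) (hBψ : Bψ = sSup (b '' dψ))
    -- the smoothed functions φ_γ and φ_{γ'}, with 0 < γ ≤ γ'
    (γ γ' : ℝ) (hγ : 0 < γ) (hγ' : γ ≤ γ')
    (φ : ℝ → EuclideanSpace ℝ (Fin q) → ℝ)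
    (hφ : ∀ s u, φ s u = sSup ((fun y => ⟪u, K y⟫ - ψ y - s * b y) '' dψ))
    -- F, and Φ_γ := φ_γ ∘ F differentiable with L_{Φ_γ}-Lipschitz gradient
    (F : EuclideanSpace ℝ (Fin p) → EuclideanSpace ℝ (Fin q))
    (gΦ : EuclideanSpace ℝ (Fin p) → EuclideanSpace ℝ (Fin p))
    (hgΦ : ∀ x, HasGradientAt (fun z => φ γ (F z)) (gΦ x) x)
    (LΦ : ℝ) (hLΦ_pos : 0 < LΦ)
    (hLip : ∀ x x', ‖gΦ x - gΦ x'‖ ≤ LΦ * ‖x - x'‖)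
    -- ℛ proper, closed, convex (with effective domain dR), and its proximal operator
    (ℛ : EuclideanSpace ℝ (Fin p) → ℝ) (dR : Set (EuclideanSpace ℝ (Fin p)))
    (hdR_ne : dR.Nonempty) (hdR_closed : IsClosed dR) (hdR_convex : Convex ℝ dR)
    (hℛ_convex : ConvexOn ℝ dR ℛ) (hℛ_lsc : LowerSemicontinuousOn ℛ dR)
    (prox : ℝ → EuclideanSpace ℝ (Fin p) → EuclideanSpace ℝ (Fin p))
    (hprox : ∀ η : ℝ, 0 < η → ∀ z, prox η z ∈ dR ∧
      IsMinOn (fun y => ℛ y + ‖y - z‖ ^ 2 / (2 * η)) dR (prox η z))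
    -- the data of the step
    (x : EuclideanSpace ℝ (Fin p)) (hx : x ∈ dR)
    (v : EuclideanSpace ℝ (Fin p))
    (η θ : ℝ) (hη : 0 < η) (hθ : θ ∈ Set.Icc (0 : ℝ) 1) :
    φ γ (F ((1 - θ) • x + θ • prox η (x - η • v))) +
        ℛ ((1 - θ) • x + θ • prox η (x - η • v)) ≤
      φ γ' (F x) + ℛ x + (γ' - γ) * Bψ
        + θ * (1 + LΦ ^ 2 * η ^ 2) / (2 * LΦ) * ‖gΦ x - v‖ ^ 2
        - LΦ * η ^ 2 * θ / 4 * ‖η⁻¹ • (x - prox η (x - η • gΦ x))‖ ^ 2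
        - θ / 2 * (2 / η - LΦ * θ - 2 * LΦ) * ‖prox η (x - η • v) - x‖ ^ 2 := by

  obtain ⟨hθ0, hθ1⟩ := hθ
  set xv := prox η (x - η • v) with hxvdef
  set xg := prox η (x - η • gΦ x) with hxgdef
  obtain ⟨hxvmem, hxvmin⟩ := hprox η hη (x - η • v)
  obtain ⟨hxgmem, hxgmin⟩ := hprox η hη (x - η • gΦ x)
  -- compactness of dom ψ and boundedness facts
  have hbdd : Bornology.IsBounded dψ := isBounded_iff_forall_norm_le.mpr ⟨Mψ, hMψ⟩
  have hKcomp : IsCompact dψ := Metric.isCompact_of_isClosed_isBounded hdψ_closed hbdd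
  obtain ⟨mψ, hmψ⟩ := aux_lsc_bddBelow hKcomp hψ_lsc
  have hbB : ∀ y ∈ dψ, b y ≤ Bψ := by
    intro y hy
    rw [hBψ]
    exact le_csSup (hKcomp.bddAbove_image hb_smooth.continuous.continuousOn) ⟨y, hy, rfl⟩
  -- the smoothing inequality `φ γ u ≤ φ γ' u + (γ' - γ) Bψ`
  have hsm : ∀ u, φ γ u ≤ φ γ' u + (γ' - γ) * Bψ := by
    intro u
    rw [hφ, hφ]
    have hbddA : BddAbove ((fun y => ⟪u, K y⟫ - ψ y - γ' * b y) '' dψ) := by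
      refine ⟨‖u‖ * (‖K‖ * Mψ) - mψ, ?_⟩
      rintro _ ⟨y, hy, rfl⟩
      have h1 : ⟪u, K y⟫ ≤ ‖u‖ * (‖K‖ * Mψ) := by
        refine le_trans (real_inner_le_norm u (K y)) ?_
        have h2 : ‖K y‖ ≤ ‖K‖ * Mψ := le_trans (K.le_opNorm y)
          (mul_le_mul_of_nonneg_left (hMψ y hy) (norm_nonneg (K : _ →L[ℝ] _)))
        exact mul_le_mul_of_nonneg_left h2 (norm_nonneg u)
      have h3 : 0 ≤ γ' * b y := mul_nonneg (by linarith) (hb_nonneg y hy)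
      have h4 := hmψ y hy
      simp only []
      linarith
    apply csSup_le (hdψ_ne.image _)
    rintro _ ⟨y, hy, rfl⟩
    have h2 : ⟪u, K y⟫ - ψ y - γ' * b y ≤ sSup ((fun y => ⟪u, K y⟫ - ψ y - γ' * b y) '' dψ) :=
      le_csSup hbddA ⟨y, hy, rfl⟩
    have h3 : (γ' - γ) * b y ≤ (γ' - γ) * Bψ :=
      mul_le_mul_of_nonneg_left (hbB y hy) (by linarith)
    simp only []
    linarith
  -- descent lemma
  have h1 := aux_descent (fun z => φ γ (F z)) gΦ hgΦ LΦ hLΦ_pos.le hLip x ((1 - θ) • x + θ • xv)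
  have hxp : ((1 - θ) • x + θ • xv) - x = θ • (xv - x) := by module
  rw [hxp, real_inner_smul_right, norm_smul, Real.norm_eq_abs, abs_of_nonneg hθ0] at h1
  have hip : ⟪gΦ x, xv - x⟫ = ⟪gΦ x - v, xv - x⟫ + ⟪xv - x, v⟫ := by
    rw [inner_sub_left, real_inner_comm (xv - x) v]; ring
  rw [hip] at h1
  -- convexity of ℛ
  have hconv := hℛ_convex.2 hx hxvmem (show (0:ℝ) ≤ 1 - θ by linarith) hθ0
    (by ring : (1 - θ) + θ = 1)
  simp only [smul_eq_mul] at hconv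
  -- prox inequality at xv
  have hsm4 := aux_strongmin dR ℛ hℛ_convex η hη (x - η • v) xv x hxvmem hx hxvmin
  have e1 : ‖xv - (x - η • v)‖ ^ 2 = ‖xv - x‖ ^ 2 + 2 * η * ⟪xv - x, v⟫ + η ^ 2 * ‖v‖ ^ 2 := by
    rw [show xv - (x - η • v) = (xv - x) + η • v from by module, norm_add_sq_real,
      real_inner_smul_right, norm_smul, Real.norm_eq_abs, abs_of_pos hη]
    ring
  have e2 : ‖x - (x - η • v)‖ ^ 2 = η ^ 2 * ‖v‖ ^ 2 := by
    rw [show x - (x - η • v) = η • v from by module, norm_smul, Real.norm_eq_abs, abs_of_pos hη]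
    ring
  have e3 : ‖x - xv‖ ^ 2 = ‖xv - x‖ ^ 2 := by rw [norm_sub_rev]
  rw [e1, e2, e3] at hsm4
  have hηne : η ≠ 0 := ne_of_gt hη
  have hLne : LΦ ≠ 0 := ne_of_gt hLΦ_pos
  have e4 : (‖xv - x‖ ^ 2 + 2 * η * ⟪xv - x, v⟫ + η ^ 2 * ‖v‖ ^ 2) / (2 * η)
      + ‖xv - x‖ ^ 2 / (2 * η) - η ^ 2 * ‖v‖ ^ 2 / (2 * η)
      = ⟪xv - x, v⟫ + ‖xv - x‖ ^ 2 / η := by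
    field_simp
    ring
  have h4 : ℛ xv + ⟪xv - x, v⟫ + ‖xv - x‖ ^ 2 / η ≤ ℛ x := by linarith [hsm4, e4]
  have h4θ : θ * ℛ xv + θ * ⟪xv - x, v⟫ + θ * (‖xv - x‖ ^ 2 / η) ≤ θ * ℛ x := by
    have h := mul_le_mul_of_nonneg_left h4 hθ0
    nlinarith [h]
  -- nonexpansiveness of prox
  have hne : ‖xv - xg‖ ≤ η * ‖gΦ x - v‖ := by
    have h := aux_nonexp dR ℛ hℛ_convex η hη (x - η • v) (x - η • gΦ x) xv xg hxvmem hxgmem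
      hxvmin hxgmin
    rw [show (x - η • v) - (x - η • gΦ x) = η • (gΦ x - v) from by module, norm_smul,
      Real.norm_eq_abs, abs_of_pos hη] at h
    exact h
  have h5 : ‖x - xg‖ ≤ ‖xv - x‖ + η * ‖gΦ x - v‖ := by
    have htri := dist_triangle x xv xg
    simp only [dist_eq_norm] at htri
    rw [norm_sub_rev x xv] at htri
    linarith
  have h5sq : ‖x - xg‖ ^ 2 ≤ (‖xv - x‖ + η * ‖gΦ x - v‖) ^ 2 :=
    pow_le_pow_left₀ (norm_nonneg (x - xg)) h5 2
  have hgn2 : LΦ * θ * ‖x - xg‖ ^ 2 / 4 ≤ LΦ * θ * (‖xv - x‖ + η * ‖gΦ x - v‖) ^ 2 / 4 := by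
    have h := mul_le_mul_of_nonneg_left h5sq
      (div_nonneg (mul_nonneg hLΦ_pos.le hθ0) (by norm_num) : (0:ℝ) ≤ LΦ * θ / 4)
    nlinarith [h]
  have youngθ : θ * ⟪gΦ x - v, xv - x⟫ ≤ θ * (‖gΦ x - v‖ * ‖xv - x‖) :=
    mul_le_mul_of_nonneg_left (real_inner_le_norm _ _) hθ0
  have hid : θ * ‖gΦ x - v‖ ^ 2 / (2 * LΦ) + LΦ * η ^ 2 * θ * ‖gΦ x - v‖ ^ 2 / 2
      - LΦ * θ * (‖xv - x‖ + η * ‖gΦ x - v‖) ^ 2 / 4 + LΦ * θ * ‖xv - x‖ ^ 2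
      - θ * (‖gΦ x - v‖ * ‖xv - x‖)
      = θ * ((‖gΦ x - v‖ - LΦ * ‖xv - x‖) ^ 2 / (2 * LΦ))
        + LΦ * θ * (η * ‖gΦ x - v‖ - ‖xv - x‖) ^ 2 / 4 := by
    field_simp
    ring
  have hsq1 : 0 ≤ θ * ((‖gΦ x - v‖ - LΦ * ‖xv - x‖) ^ 2 / (2 * LΦ)) :=
    mul_nonneg hθ0 (div_nonneg (sq_nonneg _) (by linarith))
  have hsq2 : 0 ≤ LΦ * θ * (η * ‖gΦ x - v‖ - ‖xv - x‖) ^ 2 / 4 := by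
    have := mul_nonneg (mul_nonneg hLΦ_pos.le hθ0) (sq_nonneg (η * ‖gΦ x - v‖ - ‖xv - x‖))
    linarith
  have hGnorm : ‖η⁻¹ • (x - xg)‖ = ‖x - xg‖ / η := by
    rw [norm_smul, Real.norm_eq_abs, abs_inv, abs_of_pos hη]; ring
  have hgoalRHS : φ γ' (F x) + ℛ x + (γ' - γ) * Bψ
        + θ * (1 + LΦ ^ 2 * η ^ 2) / (2 * LΦ) * ‖gΦ x - v‖ ^ 2
        - LΦ * η ^ 2 * θ / 4 * ‖η⁻¹ • (x - xg)‖ ^ 2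
        - θ / 2 * (2 / η - LΦ * θ - 2 * LΦ) * ‖xv - x‖ ^ 2
      = φ γ' (F x) + ℛ x + (γ' - γ) * Bψ
        + θ * ‖gΦ x - v‖ ^ 2 / (2 * LΦ) + LΦ * η ^ 2 * θ * ‖gΦ x - v‖ ^ 2 / 2
        - LΦ * θ * ‖x - xg‖ ^ 2 / 4 - θ * (‖xv - x‖ ^ 2 / η)
        + LΦ * θ ^ 2 * ‖xv - x‖ ^ 2 / 2 + LΦ * θ * ‖xv - x‖ ^ 2 := by
    rw [hGnorm]
    field_simp
    ring
  have hsmx := hsm (F x)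
  linarith [h1, hsmx, hconv, h4θ, youngθ, hgn2, hid, hsq1, hsq2, hgoalRHS]
end

section
/- Let Φ_γ : ℝᵖ → ℝ be differentiable with L_{Φ_γ}-Lipschitz gradient and ℛ : ℝᵖ → ℝ∪{+∞} proper, closed, convex. Fix x̄ ∈ ℝᵖ, η > 0, and an arbitrary vector g ∈ ℝᵖ (an approximation ∇̃Φ_γ(x̄) of ∇Φ_γ(x̄)), and set x̃*_γ := prox_{ηℛ}(x̄ − ηg). Then dist(0, ∇Φ_γ(x̃*_γ) + ∂ℛ(x̃*_γ)) ≤ (1 + ηL_{Φ_γ})‖G_η(x̄)‖ + (2 + ηL_{Φ_γ})‖∇Φ_γ(x̄) − g‖, where ∂ℛ denotes the convex subdifferential, dist(z, S) := inf_{s∈S}‖z − s‖, and G_η(x̄) := (x̄ − prox_{ηℛ}(x̄ − η∇Φ_γ(x̄)))/η. -/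
open scoped RealInnerProductSpace

/-- The convex subdifferential `∂R(x) := {w : R(y) ≥ R(x) + ⟨w, y − x⟩ for all y}`. -/
def subdiff {p : ℕ} (R : EuclideanSpace ℝ (Fin p) → ℝ) (x : EuclideanSpace ℝ (Fin p)) :
    Set (EuclideanSpace ℝ (Fin p)) :=
  {w | ∀ y, R x + ⟪w, y - x⟫ ≤ R y}

lemma prox_subgrad {p : ℕ} (R : EuclideanSpace ℝ (Fin p) → ℝ)
    (hconv : ConvexOn ℝ Set.univ R) (η : ℝ) (hη : 0 < η)
    (z m : EuclideanSpace ℝ (Fin p))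
    (hm : IsMinOn (fun y => R y + ‖y - z‖ ^ 2 / (2 * η)) Set.univ m) :
    η⁻¹ • (z - m) ∈ subdiff R m := by
  intro y
  have key : ∀ t : ℝ, 0 < t → t ≤ 1 →
      R m - R y ≤ ⟪m - z, y - m⟫ / η + t * ‖y - m‖ ^ 2 / (2 * η) := by
    intro t ht ht1
    have hmin := hm (Set.mem_univ (m + t • (y - m)))
    simp only at hmin
    have hcv : R (m + t • (y - m)) ≤ (1 - t) * R m + t * R y := by
      have h := hconv.2 (Set.mem_univ m) (Set.mem_univ y) (by linarith : (0:ℝ) ≤ 1 - t)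
        ht.le (by ring)
      have he : (1 - t) • m + t • y = m + t • (y - m) := by module
      rw [he] at h
      simpa [smul_eq_mul] using h
    have hexp : ‖m + t • (y - m) - z‖ ^ 2
        = ‖m - z‖ ^ 2 + 2 * t * ⟪m - z, y - m⟫ + t ^ 2 * ‖y - m‖ ^ 2 := by
      have h1 : m + t • (y - m) - z = (m - z) + t • (y - m) := by module
      rw [h1, norm_add_sq_real, real_inner_smul_right, norm_smul]
      rw [mul_pow]
      simp [abs_of_pos ht]
      ring
    have hη2 : (0:ℝ) < 2 * η := by linarith
    have h2 : R m + ‖m - z‖ ^ 2 / (2 * η)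
        ≤ (1 - t) * R m + t * R y
          + (‖m - z‖ ^ 2 + 2 * t * ⟪m - z, y - m⟫ + t ^ 2 * ‖y - m‖ ^ 2) / (2 * η) := by
      calc R m + ‖m - z‖ ^ 2 / (2 * η) ≤ _ := hmin
        _ ≤ _ := by rw [hexp]; linarith
    have h3 : t * (R m - R y) ≤ (2 * t * ⟪m - z, y - m⟫ + t ^ 2 * ‖y - m‖ ^ 2) / (2 * η) := by
      have e : (‖m - z‖ ^ 2 + 2 * t * ⟪m - z, y - m⟫ + t ^ 2 * ‖y - m‖ ^ 2) / (2 * η)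
          = ‖m - z‖ ^ 2 / (2 * η)
            + (2 * t * ⟪m - z, y - m⟫ + t ^ 2 * ‖y - m‖ ^ 2) / (2 * η) := by ring
      rw [e] at h2
      linarith
    have h4 : R m - R y ≤ (2 * ⟪m - z, y - m⟫ + t * ‖y - m‖ ^ 2) / (2 * η) := by
      rw [← mul_le_mul_iff_right₀ ht]
      calc t * (R m - R y) ≤ _ := h3
        _ = t * ((2 * ⟪m - z, y - m⟫ + t * ‖y - m‖ ^ 2) / (2 * η)) := by ring
    calc R m - R y ≤ _ := h4
      _ = ⟪m - z, y - m⟫ / η + t * ‖y - m‖ ^ 2 / (2 * η) := by field_simp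
  have hfin : R m - R y ≤ ⟪m - z, y - m⟫ / η := by
    refine le_of_forall_pos_le_add fun ε hε => ?_
    rcases le_or_gt (‖y - m‖ ^ 2) 0 with h | h
    · have h0 : ‖y - m‖ ^ 2 = 0 := le_antisymm h (by positivity)
      have hk := key 1 one_pos le_rfl
      rw [h0, (by ring : ⟪m - z, y - m⟫ / η + 1 * 0 / (2 * η) = ⟪m - z, y - m⟫ / η)] at hk
      linarith
    · set t := min 1 (ε * (2 * η) / ‖y - m‖ ^ 2) with htdef
      have ht : 0 < t := lt_min one_pos (by positivity)
      have hk := key t ht (min_le_left _ _)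
      have h3 : t * ‖y - m‖ ^ 2 / (2 * η) ≤ ε := by
        rw [div_le_iff₀ (by linarith)]
        calc t * ‖y - m‖ ^ 2 ≤ (ε * (2 * η) / ‖y - m‖ ^ 2) * ‖y - m‖ ^ 2 :=
              mul_le_mul_of_nonneg_right (min_le_right _ _) (by positivity)
          _ = ε * (2 * η) := div_mul_cancel₀ _ h.ne'
      linarith
  have hip : ⟪η⁻¹ • (z - m), y - m⟫ = - (⟪m - z, y - m⟫ / η) := by
    rw [real_inner_smul_left]
    have hzm : (z - m : EuclideanSpace ℝ (Fin p)) = -(m - z) := by module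
    rw [hzm, inner_neg_left]
    field_simp
  rw [hip]
  linarith

lemma prox_nonexp {p : ℕ} (R : EuclideanSpace ℝ (Fin p) → ℝ)
    (hconv : ConvexOn ℝ Set.univ R) (η : ℝ) (hη : 0 < η)
    (z₁ z₂ m₁ m₂ : EuclideanSpace ℝ (Fin p))
    (hm₁ : IsMinOn (fun y => R y + ‖y - z₁‖ ^ 2 / (2 * η)) Set.univ m₁)
    (hm₂ : IsMinOn (fun y => R y + ‖y - z₂‖ ^ 2 / (2 * η)) Set.univ m₂) :
    ‖m₁ - m₂‖ ≤ ‖z₁ - z₂‖ := by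
  have h1 := prox_subgrad R hconv η hη z₁ m₁ hm₁ m₂
  have h2 := prox_subgrad R hconv η hη z₂ m₂ hm₂ m₁
  have hsum : ⟪η⁻¹ • (z₁ - m₁), m₂ - m₁⟫ + ⟪η⁻¹ • (z₂ - m₂), m₁ - m₂⟫ ≤ 0 := by linarith
  rw [real_inner_smul_left, real_inner_smul_left] at hsum
  have hη' : (0:ℝ) < η⁻¹ := by positivity
  have h3 : ⟪z₁ - m₁, m₂ - m₁⟫ + ⟪z₂ - m₂, m₁ - m₂⟫ ≤ 0 := by nlinarith
  have h3' : ⟪z₂ - m₂ - (z₁ - m₁), m₁ - m₂⟫ ≤ 0 := by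
    rw [inner_sub_left]
    have he : ⟪z₁ - m₁, m₁ - m₂⟫ = -⟪z₁ - m₁, m₂ - m₁⟫ := by
      rw [← inner_neg_right]; congr 1; module
    linarith
  have he2 : (z₂ - m₂ - (z₁ - m₁) : EuclideanSpace ℝ (Fin p))
      = (m₁ - m₂) - (z₁ - z₂) := by module
  rw [he2, inner_sub_left, real_inner_self_eq_norm_sq] at h3'
  have h4 : ‖m₁ - m₂‖ ^ 2 ≤ ⟪z₁ - z₂, m₁ - m₂⟫ := by linarith
  have h5 := real_inner_le_norm (z₁ - z₂) (m₁ - m₂)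
  rcases eq_or_lt_of_le (norm_nonneg (m₁ - m₂)) with h | h
  · rw [← h]; exact norm_nonneg _
  · nlinarith

/-- For `Φ_γ` differentiable with `L_{Φ_γ}`-Lipschitz gradient, `ℛ` proper,
closed, convex, `x̄ ∈ ℝᵖ`, `η > 0`, an arbitrary vector `g` (approximating `∇Φ_γ(x̄)`), and
`x̃*_γ := prox_{ηℛ}(x̄ − ηg)`:
`dist(0, ∇Φ_γ(x̃*_γ) + ∂ℛ(x̃*_γ)) ≤ (1 + ηL)‖G_η(x̄)‖ + (2 + ηL)‖∇Φ_γ(x̄) − g‖`. -/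
theorem stmt_16 {p : ℕ}
    -- Φ_γ differentiable with L_{Φ_γ}-Lipschitz gradient
    (Φγ : EuclideanSpace ℝ (Fin p) → ℝ)
    (gΦ : EuclideanSpace ℝ (Fin p) → EuclideanSpace ℝ (Fin p))
    (hΦ_diff : ∀ x, HasGradientAt Φγ (gΦ x) x)
    (LΦ : ℝ) (hLΦ_pos : 0 < LΦ)
    (hLip : ∀ x x', ‖gΦ x - gΦ x'‖ ≤ LΦ * ‖x - x'‖)
    -- ℛ proper, closed, convex, with its proximal operator
    (ℛ : EuclideanSpace ℝ (Fin p) → ℝ)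
    (hℛ_convex : ConvexOn ℝ Set.univ ℛ)
    (hℛ_lsc : LowerSemicontinuous ℛ)
    (prox : ℝ → EuclideanSpace ℝ (Fin p) → EuclideanSpace ℝ (Fin p))
    (hprox : ∀ η : ℝ, 0 < η → ∀ z,
      IsMinOn (fun y => ℛ y + ‖y - z‖ ^ 2 / (2 * η)) Set.univ (prox η z))
    -- data of the statement
    (xbar : EuclideanSpace ℝ (Fin p)) (η : ℝ) (hη : 0 < η)
    (g : EuclideanSpace ℝ (Fin p)) :
    Metric.infDist 0
        ((fun w => gΦ (prox η (xbar - η • g)) + w) '' subdiff ℛ (prox η (xbar - η • g))) ≤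
      (1 + η * LΦ) * ‖η⁻¹ • (xbar - prox η (xbar - η • gΦ xbar))‖
        + (2 + η * LΦ) * ‖gΦ xbar - g‖ := by
  set z := xbar - η • g with hz
  set xt := prox η z with hx
  set zh := xbar - η • gΦ xbar with hzh
  set xh := prox η zh with hxh
  have hw : η⁻¹ • (z - xt) ∈ subdiff ℛ xt :=
    prox_subgrad ℛ hℛ_convex η hη z xt (hprox η hη z)
  have hmem : gΦ xt + η⁻¹ • (z - xt) ∈ (fun w => gΦ xt + w) '' subdiff ℛ xt :=
    Set.mem_image_of_mem _ hw
  have hle := Metric.infDist_le_dist_of_mem (x := 0) hmem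
  rw [dist_zero_left] at hle
  refine hle.trans ?_
  set A := ‖η⁻¹ • (xbar - xh)‖ with hA
  set B := ‖gΦ xbar - g‖ with hB
  have hv : gΦ xt + η⁻¹ • (z - xt)
      = (gΦ xt - gΦ xbar) + (gΦ xbar - g) + η⁻¹ • (xbar - xt) := by
    rw [hz, sub_sub, smul_sub, smul_add, smul_smul, inv_mul_cancel₀ hη.ne', one_smul,
      smul_sub]
    abel
  have hsplit : (η⁻¹ • (xbar - xt) : EuclideanSpace ℝ (Fin p))
      = η⁻¹ • (xbar - xh) + η⁻¹ • (xh - xt) := by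
    rw [← smul_add]
    congr 1
    abel
  have hnonexp : ‖xh - xt‖ ≤ ‖zh - z‖ :=
    prox_nonexp ℛ hℛ_convex η hη zh z xh xt (hprox η hη zh) (hprox η hη z)
  have hzz : ‖zh - z‖ = η * B := by
    have : zh - z = η • (g - gΦ xbar) := by rw [hzh, hz]; module
    rw [this, norm_smul, Real.norm_eq_abs, abs_of_pos hη, hB, norm_sub_rev]
  have hC : ‖η⁻¹ • (xbar - xt)‖ ≤ A + B := by
    rw [hsplit]
    refine (norm_add_le _ _).trans ?_
    have : ‖η⁻¹ • (xh - xt)‖ ≤ B := by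
      rw [norm_smul, Real.norm_eq_abs, abs_of_pos (inv_pos.mpr hη)]
      calc η⁻¹ * ‖xh - xt‖ ≤ η⁻¹ * (η * B) := by
            apply mul_le_mul_of_nonneg_left (hnonexp.trans hzz.le) (by positivity)
        _ = B := by field_simp
    linarith
  have hxx : ‖xt - xbar‖ = η * ‖η⁻¹ • (xbar - xt)‖ := by
    rw [norm_smul, Real.norm_eq_abs, abs_of_pos (inv_pos.mpr hη), norm_sub_rev]
    field_simp
  have hlip1 : ‖gΦ xt - gΦ xbar‖ ≤ η * LΦ * (A + B) := by
    calc ‖gΦ xt - gΦ xbar‖ ≤ LΦ * ‖xt - xbar‖ := hLip _ _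
      _ = η * LΦ * ‖η⁻¹ • (xbar - xt)‖ := by rw [hxx]; ring
      _ ≤ η * LΦ * (A + B) := by
          apply mul_le_mul_of_nonneg_left hC (by positivity)
  calc ‖gΦ xt + η⁻¹ • (z - xt)‖
      ≤ ‖gΦ xt - gΦ xbar‖ + ‖gΦ xbar - g‖ + ‖η⁻¹ • (xbar - xt)‖ := by
        rw [hv]; exact norm_add₃_le
    _ ≤ η * LΦ * (A + B) + B + (A + B) := by
        have := hlip1; have := hC; linarith
    _ = (1 + η * LΦ) * A + (2 + η * LΦ) * B := by ring
end
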